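/- arXiv:1007.1250 — 2 statements merged into one kernel-verified Lean document; each statement's English description precedes it below -/
import Mathlib

section
/- Let f = ⊕_{i ≥ −1} f^i be a quantum type differential graded Lie algebra over ℝ, with differential d and bracket [−,−]. Let ω ∈ f¹ be a Maurer–Cartan element, i.e., d(ω) + ½[ω,ω] = 0. Define on h := f^{−1} the bilinear operation [β₁,β₂]_ω := [d(β₁) + [ω,β₁], β₂]. Then (h, [−,−]_ω) is a Lie algebra, and the map d_ω : h → f⁰ given by d_ω(β) := d(β) + [ω,β] is a Lie algebra homomorphism into f⁰ with its Lie bracket. -/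
namespace Stmt8

variable {L : Type*} [AddCommGroup L] [Module ℝ L]

/-- The twisted differential `d_ω(β) = d(β) + [ω, β]`. -/
def dOmega (br : L →ₗ[ℝ] L →ₗ[ℝ] L) (d : L →ₗ[ℝ] L) (ω β : L) : L :=
  d β + br ω β

/-- The twisted bracket `[β₁, β₂]_ω = [d(β₁) + [ω, β₁], β₂]`. -/
def brOmega (br : L →ₗ[ℝ] L →ₗ[ℝ] L) (d : L →ₗ[ℝ] L) (ω β₁ β₂ : L) : L :=
  br (dOmega br d ω β₁) β₂

end Stmt8

open Stmt8 in
/-- **The twisted bracket of a Maurer–Cartan element on the degree `−1` part of a quantum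
type DG Lie algebra is a Lie bracket, and `d_ω` is a Lie algebra homomorphism.**
The quantum type DG Lie algebra `f = ⊕_{i ≥ −1} fⁱ` is encoded as an ℝ-module `L` with a
grading by submodules `deg i` (vanishing for `i < −1`), a bilinear bracket `br` of degree
`0`, a differential `d` of degree `1` with `d² = 0`, satisfying graded antisymmetry, graded
Jacobi, and the graded Leibniz rule.  Let `ω ∈ f¹` satisfy the Maurer–Cartan equation
`d(ω) + ½[ω,ω] = 0`, and on `h = f^{−1}` define `[β₁,β₂]_ω := [d(β₁)+[ω,β₁], β₂]` and
`d_ω(β) := d(β)+[ω,β]`.  Then `[−,−]_ω` maps `h × h` to `h`, it is antisymmetric and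
satisfies the Jacobi identity (so `(h, [−,−]_ω)` is a Lie algebra, bilinearity being
automatic), and `d_ω : h → f⁰` is a homomorphism of Lie algebras into `f⁰` with its
bracket. -/
theorem stmt_8 {L : Type*} [AddCommGroup L] [Module ℝ L]
    (deg : ℤ → Submodule ℝ L)
    (br : L →ₗ[ℝ] L →ₗ[ℝ] L) (d : L →ₗ[ℝ] L)
    (hquantum : ∀ i : ℤ, i < -1 → deg i = ⊥)
    (hbr : ∀ (i j : ℤ) (x y : L), x ∈ deg i → y ∈ deg j → br x y ∈ deg (i + j))
    (hd : ∀ (i : ℤ) (x : L), x ∈ deg i → d x ∈ deg (i + 1))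
    (hd2 : ∀ x : L, d (d x) = 0)
    (hanti : ∀ (i j : ℤ) (x y : L), x ∈ deg i → y ∈ deg j →
      br x y = -((-1 : ℝ) ^ (i * j)) • br y x)
    (hjac : ∀ (i j : ℤ) (x y z : L), x ∈ deg i → y ∈ deg j →
      br x (br y z) = br (br x y) z + ((-1 : ℝ) ^ (i * j)) • br y (br x z))
    (hleib : ∀ (i : ℤ) (x y : L), x ∈ deg i →
      d (br x y) = br (d x) y + ((-1 : ℝ) ^ i) • br x (d y))
    (ω : L) (hω : ω ∈ deg 1)
    (hMC : d ω + (2 : ℝ)⁻¹ • br ω ω = 0) :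
    (∀ β₁ β₂ : L, β₁ ∈ deg (-1) → β₂ ∈ deg (-1) →
      brOmega br d ω β₁ β₂ ∈ deg (-1)) ∧
    (∀ β₁ β₂ : L, β₁ ∈ deg (-1) → β₂ ∈ deg (-1) →
      brOmega br d ω β₁ β₂ = -brOmega br d ω β₂ β₁) ∧
    (∀ β₁ β₂ β₃ : L, β₁ ∈ deg (-1) → β₂ ∈ deg (-1) → β₃ ∈ deg (-1) →
      brOmega br d ω (brOmega br d ω β₁ β₂) β₃ +
        brOmega br d ω (brOmega br d ω β₂ β₃) β₁ +
          brOmega br d ω (brOmega br d ω β₃ β₁) β₂ = 0) ∧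
    (∀ β : L, β ∈ deg (-1) → dOmega br d ω β ∈ deg 0) ∧
    (∀ β₁ β₂ : L, β₁ ∈ deg (-1) → β₂ ∈ deg (-1) →
      dOmega br d ω (brOmega br d ω β₁ β₂) =
        br (dOmega br d ω β₁) (dOmega br d ω β₂)) := by
  -- the bracket of two degree `-1` elements vanishes
  have hz : ∀ x y : L, x ∈ deg (-1) → y ∈ deg (-1) → br x y = 0 := by
    intro x y hx hy
    have h := hbr (-1) (-1) x y hx hy
    rw [show (-1 : ℤ) + -1 = -2 by norm_num, hquantum (-2) (by norm_num)] at h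
    simpa using h
  have hdm : ∀ β : L, β ∈ deg (-1) → d β ∈ deg 0 := fun β hβ => by
    simpa using hd (-1) β hβ
  have hwm : ∀ β : L, β ∈ deg (-1) → br ω β ∈ deg 0 := fun β hβ => by
    simpa using hbr 1 (-1) ω β hω hβ
  have hmemD : ∀ β : L, β ∈ deg (-1) → dOmega br d ω β ∈ deg 0 := fun β hβ =>
    Submodule.add_mem _ (hdm β hβ) (hwm β hβ)
  have hmemB : ∀ β₁ β₂ : L, β₁ ∈ deg (-1) → β₂ ∈ deg (-1) →
      brOmega br d ω β₁ β₂ ∈ deg (-1) := by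
    intro β₁ β₂ h1 h2
    simpa [brOmega] using hbr 0 (-1) _ _ (hmemD β₁ h1) h2
  -- antisymmetry
  have hA : ∀ β₁ β₂ : L, β₁ ∈ deg (-1) → β₂ ∈ deg (-1) →
      brOmega br d ω β₁ β₂ = -brOmega br d ω β₂ β₁ := by
    intro β₁ β₂ h1 h2
    have l1 := hleib (-1) β₁ β₂ h1
    rw [hz β₁ β₂ h1 h2, map_zero, show ((-1 : ℝ) ^ (-1 : ℤ)) = -1 by norm_num] at l1
    have e1 := hanti (-1) 0 β₁ (d β₂) h1 (hdm β₂ h2)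
    rw [show ((-1 : ℤ) * 0) = 0 by norm_num, show ((-1 : ℝ) ^ (0 : ℤ)) = 1 by norm_num] at e1
    have j1 := hjac 1 (-1) ω β₁ β₂ hω h1
    rw [hz β₁ β₂ h1 h2, map_zero,
      show ((1 : ℤ) * (-1)) = -1 by norm_num,
      show ((-1 : ℝ) ^ (-1 : ℤ)) = -1 by norm_num] at j1
    have e2 := hanti (-1) 0 β₁ (br ω β₂) h1 (hwm β₂ h2)
    rw [show ((-1 : ℤ) * 0) = 0 by norm_num, show ((-1 : ℝ) ^ (0 : ℤ)) = 1 by norm_num] at e2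
    simp only [brOmega, dOmega, map_add, LinearMap.add_apply]
    linear_combination (norm := module) -l1 + e1 - j1 + e2
  -- the square of the twisted differential vanishes
  have hDD : ∀ β : L, d (dOmega br d ω β) + br ω (dOmega br d ω β) = 0 := by
    intro β
    have g1 := hleib 1 ω β hω
    rw [show ((-1 : ℝ) ^ (1 : ℤ)) = -1 by norm_num] at g1
    have g2 := hjac 1 1 ω ω β hω hω
    rw [show ((1 : ℤ) * 1) = 1 by norm_num,
      show ((-1 : ℝ) ^ (1 : ℤ)) = -1 by norm_num] at g2
    have g3 : br (d ω) β + (2 : ℝ)⁻¹ • br (br ω ω) β = 0 := by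
      have := congrArg (fun x => br x β) hMC
      simpa [map_add, map_smul, LinearMap.add_apply, LinearMap.smul_apply] using this
    have g4 := hd2 β
    simp only [dOmega, map_add]
    linear_combination (norm := module) g4 + g1 + g3 + (2 : ℝ)⁻¹ • g2
  -- `d_ω` is a homomorphism (key computation, with abstract `A`)
  have key : ∀ A β₂ : L, A ∈ deg 0 → d A + br ω A = 0 →
      d (br A β₂) + br ω (br A β₂) = br A (d β₂ + br ω β₂) := by
    intro A β₂ hAmem hA0
    have k3 : br (d A) β₂ + br (br ω A) β₂ = 0 := by
      have := congrArg (fun x => br x β₂) hA0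
      simpa [map_add, LinearMap.add_apply] using this
    have k1 := hleib 0 A β₂ hAmem
    rw [show ((-1 : ℝ) ^ (0 : ℤ)) = 1 by norm_num] at k1
    have k2 := hjac 1 0 ω A β₂ hω hAmem
    rw [show ((1 : ℤ) * 0) = 0 by norm_num,
      show ((-1 : ℝ) ^ (0 : ℤ)) = 1 by norm_num] at k2
    simp only [map_add]
    linear_combination (norm := module) k1 + k2 + k3
  have hHom : ∀ β₁ β₂ : L, β₁ ∈ deg (-1) →
      dOmega br d ω (brOmega br d ω β₁ β₂) =
        br (dOmega br d ω β₁) (dOmega br d ω β₂) := by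
    intro β₁ β₂ h1
    have := key (dOmega br d ω β₁) β₂ (hmemD β₁ h1) (hDD β₁)
    simpa [brOmega, dOmega] using this
  refine ⟨hmemB, hA, ?_, hmemD, fun β₁ β₂ h1 _ => hHom β₁ β₂ h1⟩
  -- Jacobi identity
  intro β₁ β₂ β₃ h1 h2 h3
  have hom12 := hHom β₁ β₂ h1
  have hom23 := hHom β₂ β₃ h2
  have hom31 := hHom β₃ β₁ h3
  have jac1 := hjac 0 0 (dOmega br d ω β₁) (dOmega br d ω β₂) β₃ (hmemD β₁ h1) (hmemD β₂ h2)
  rw [show ((0 : ℤ) * 0) = 0 by norm_num,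
    show ((-1 : ℝ) ^ (0 : ℤ)) = 1 by norm_num] at jac1
  -- c1 : [A₂, [A₁, β₃]] = -[A₂, [A₃, β₁]]
  have ant13 : brOmega br d ω β₁ β₃ = -brOmega br d ω β₃ β₁ := hA β₁ β₃ h1 h3
  have c1 : br (dOmega br d ω β₂) (br (dOmega br d ω β₁) β₃)
      = -br (dOmega br d ω β₂) (br (dOmega br d ω β₃) β₁) := by
    have := congrArg (fun x => br (dOmega br d ω β₂) x) ant13
    simpa [brOmega, map_neg] using this
  -- t1 : [A₁, [A₂, β₃]] = -[[A₂, A₃], β₁]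
  have t1 : br (dOmega br d ω β₁) (br (dOmega br d ω β₂) β₃)
      = -br (br (dOmega br d ω β₂) (dOmega br d ω β₃)) β₁ := by
    have h := hA β₁ (brOmega br d ω β₂ β₃) h1 (hmemB β₂ β₃ h2 h3)
    rw [show brOmega br d ω (brOmega br d ω β₂ β₃) β₁
        = br (dOmega br d ω (brOmega br d ω β₂ β₃)) β₁ from rfl, hom23] at h
    simpa [brOmega] using h
  -- t2 : [A₂, [A₃, β₁]] = -[[A₃, A₁], β₂]
  have t2 : br (dOmega br d ω β₂) (br (dOmega br d ω β₃) β₁)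
      = -br (br (dOmega br d ω β₃) (dOmega br d ω β₁)) β₂ := by
    have h := hA β₂ (brOmega br d ω β₃ β₁) h2 (hmemB β₃ β₁ h3 h1)
    rw [show brOmega br d ω (brOmega br d ω β₃ β₁) β₂
        = br (dOmega br d ω (brOmega br d ω β₃ β₁)) β₂ from rfl, hom31] at h
    simpa [brOmega] using h
  simp only [brOmega] at hom12 hom23 hom31 ⊢
  rw [hom12, hom23, hom31]
  linear_combination (norm := module) t1 + t2 - jac1 - c1
end

section
/- Let (G, H, Ψ, Φ₀) be a Lie quasi crossed module and g ∈ G. Define a new multiplication on the underlying manifold of H by h₁ ·^g h₂ := Ψ(g)⁻¹(Ψ(g)(h₁)·Ψ(g)(h₂)), yielding a Lie group H^g, and define Φ₀^g : H^g → G by Φ₀^g := Ad_G(g)⁻¹ ∘ Φ₀ ∘ Ψ(g). Then (G, H^g, Ψ, Φ₀^g) is again a Lie quasi crossed module; in particular Ψ ∘ Φ₀^g = Ad_{H^g}. -/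
namespace Stmt12

variable {G H : Type*} [Group G] [Group H]

/-- The twisted multiplication `h₁ ·^g h₂ := Ψ(g)⁻¹(Ψ(g)(h₁)·Ψ(g)(h₂))` on `H`. -/
def mulg (Ψ : G →* Equiv.Perm H) (g : G) (h₁ h₂ : H) : H :=
  (Ψ g).symm (Ψ g h₁ * Ψ g h₂)

/-- The twisted inversion on `H^g`. -/
def invg (Ψ : G →* Equiv.Perm H) (g : G) (h : H) : H :=
  (Ψ g).symm (Ψ g h)⁻¹

/-- The twisted multiplicative feedback `Φ₀^g := Ad_G(g)⁻¹ ∘ Φ₀ ∘ Ψ(g)`. -/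
def phig (Ψ : G →* Equiv.Perm H) (Φ₀ : H →* G) (g : G) (h : H) : G :=
  g⁻¹ * Φ₀ (Ψ g h) * g

end Stmt12

/-- **Moving the base point: `(G, H^g, Ψ, Φ₀^g)` is again a Lie quasi crossed module.**
A Lie quasi crossed module `(G, H, Ψ, Φ₀)` is encoded by: groups `G`, `H`, an action
`Ψ : G →* Equiv.Perm H` of `G` on `H` by automorphisms of the pointed manifold `(H, 1)`
(each `Ψ g` fixes `1`), a homomorphism `Φ₀ : H →* G`, and the Pfeiffer condition
`Ψ ∘ Φ₀ = Ad_H`.  For `g ∈ G`, the twisted multiplication makes `H^g` a group (with the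
same unit `1` and with inverse `invg`), `Φ₀^g : H^g → G` is a group homomorphism, and the
Pfeiffer condition `Ψ ∘ Φ₀^g = Ad_{H^g}` holds. -/
theorem stmt_12 {G H : Type*} [Group G] [Group H]
    (Ψ : G →* Equiv.Perm H) (Φ₀ : H →* G)
    (hfix : ∀ g : G, Ψ g 1 = 1)
    (hPf : ∀ h x : H, Ψ (Φ₀ h) x = h * x * h⁻¹)
    (g : G) :
    (∀ h₁ h₂ h₃ : H, Stmt12.mulg Ψ g (Stmt12.mulg Ψ g h₁ h₂) h₃ =
      Stmt12.mulg Ψ g h₁ (Stmt12.mulg Ψ g h₂ h₃)) ∧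
    (∀ h : H, Stmt12.mulg Ψ g 1 h = h ∧ Stmt12.mulg Ψ g h 1 = h) ∧
    (∀ h : H, Stmt12.mulg Ψ g h (Stmt12.invg Ψ g h) = 1) ∧
    (∀ h₁ h₂ : H, Stmt12.phig Ψ Φ₀ g (Stmt12.mulg Ψ g h₁ h₂) =
      Stmt12.phig Ψ Φ₀ g h₁ * Stmt12.phig Ψ Φ₀ g h₂) ∧
    (∀ h x : H, Ψ (Stmt12.phig Ψ Φ₀ g h) x =
      Stmt12.mulg Ψ g h (Stmt12.mulg Ψ g x (Stmt12.invg Ψ g h))) := by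
  have key : ∀ h x : H, Ψ (g⁻¹ * Φ₀ (Ψ g h) * g) x = (Ψ g).symm (Ψ g h * Ψ g x * (Ψ g h)⁻¹) := by
    intro h x
    have : Ψ (g⁻¹ * Φ₀ (Ψ g h) * g) x = Ψ g⁻¹ (Ψ (Φ₀ (Ψ g h)) (Ψ g x)) := by
      simp [map_mul, Equiv.Perm.mul_apply]
    rw [this, hPf, mul_assoc, map_inv, Equiv.Perm.inv_def]
  refine ⟨fun h₁ h₂ h₃ => by simp [Stmt12.mulg, mul_assoc],
    fun h => ⟨by simp [Stmt12.mulg, hfix], by simp [Stmt12.mulg, hfix]⟩,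
    fun h => by simp [Stmt12.mulg, Stmt12.invg, Equiv.symm_apply_eq, hfix],
    fun h₁ h₂ => by simp [Stmt12.phig, Stmt12.mulg]; group,
    fun h x => by simp [Stmt12.phig, Stmt12.mulg, Stmt12.invg, hPf, mul_assoc, Equiv.Perm.inv_def]⟩
end
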